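/- Let f : ℝⁿ → ℝ ∪ {∞}, let x̄* ∈ ∂f(x̄), let g : ℝⁿ → ℝ be twice continuously differentiable, and set h := f + g. Then the h-attentive tangent cone to gph ∂h at (x̄, x̄* + ∇g(x̄)) equals Ā · T^f_{gph ∂f}(x̄, x̄*), where Ā is the block matrix [[I, 0], [∇²g(x̄), I]] acting on ℝⁿ × ℝⁿ. -/

import Mathlib

open scoped RealInnerProductSpace
open Filter Topology Metric Matrix

noncomputable section

abbrev En (n : ℕ) := EuclideanSpace ℝ (Fin n)

variable {n : ℕ}

/-- The regular (Fréchet) subdifferential of an extended-real-valued function. -/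
def FSubdiff (f : En n → EReal) (x : En n) : Set (En n) :=
  {v | ∀ c : ℝ, 0 < c → ∃ δ > (0:ℝ), ∀ y ∈ ball x δ,
    f x + ((⟪v, y - x⟫ - c * ‖y - x‖ : ℝ) : EReal) ≤ f y}

/-- The limiting (Mordukhovich) subdifferential, via f-attentive convergence. -/
def LSubdiff (f : En n → EReal) (x : En n) : Set (En n) :=
  {v | ∃ xs vs : ℕ → En n, (∀ k, vs k ∈ FSubdiff f (xs k)) ∧
    Tendsto xs atTop (𝓝 x) ∧ Tendsto (fun k => f (xs k)) atTop (𝓝 (f x)) ∧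
    Tendsto vs atTop (𝓝 v)}

/-- The graph of the f-attentive ε-localization of the subdifferential around (x̄, x̄*). -/
def GphT (f : En n → EReal) (xb xbs : En n) (ε : ℝ) : Set (En n × En n) :=
  {p | p.2 ∈ LSubdiff f p.1 ∧ f p.1 < f xb + (ε : EReal) ∧
       p.1 ∈ ball xb ε ∧ p.2 ∈ ball xbs ε}

/-- Prox-regularity of f at x̄ for x̄* with parameters r ≥ 0 and ε > 0. -/
def ProxReg (f : En n → EReal) (xb xbs : En n) (r ε : ℝ) : Prop :=
  (∃ a : ℝ, f xb = (a : EReal)) ∧ xbs ∈ LSubdiff f xb ∧ 0 ≤ r ∧ 0 < ε ∧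
  ∀ x' ∈ ball xb ε, ∀ p ∈ GphT f xb xbs ε,
    f p.1 + ((⟪p.2, x' - p.1⟫ - r / 2 * ‖x' - p.1‖ ^ 2 : ℝ) : EReal) ≤ f x'

/-- The f-attentive tangent cone to the graph of ∂f at (x, x*). -/
def AttTangent (f : En n → EReal) (x xstar : En n) : Set (En n × En n) :=
  {u | ∃ (t : ℕ → ℝ) (xs vs : ℕ → En n), (∀ k, 0 < t k) ∧ Tendsto t atTop (𝓝 0) ∧
    (∀ k, vs k ∈ LSubdiff f (xs k)) ∧ Tendsto xs atTop (𝓝 x) ∧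
    Tendsto (fun k => f (xs k)) atTop (𝓝 (f x)) ∧ Tendsto vs atTop (𝓝 xstar) ∧
    Tendsto (fun k => (t k)⁻¹ • ((xs k, vs k) - (x, xstar))) atTop (𝓝 u)}

-- EReal tendsto lemma
lemma ereal_tendsto_add_real {a : ℕ → EReal} {a0 : EReal} {r : ℕ → ℝ} {r0 : ℝ}
    (hr : Tendsto r atTop (𝓝 r0)) :
    Tendsto (fun k => a k + ((r k : ℝ) : EReal)) atTop (𝓝 (a0 + (r0 : EReal)))
      ↔ Tendsto a atTop (𝓝 a0) := by
  have key : ∀ (b : ℕ → EReal) (b0 : EReal) (s : ℕ → ℝ) (s0 : ℝ),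
      Tendsto b atTop (𝓝 b0) → Tendsto s atTop (𝓝 s0) →
      Tendsto (fun k => b k + ((s k : ℝ) : EReal)) atTop (𝓝 (b0 + (s0 : EReal))) := by
    intro b b0 s s0 hb hs
    have hcont : ContinuousAt (fun p : EReal × EReal => p.1 + p.2) (b0, (s0 : EReal)) :=
      EReal.continuousAt_add (Or.inr (EReal.coe_ne_bot s0)) (Or.inr (EReal.coe_ne_top s0))
    exact hcont.tendsto.comp (hb.prodMk_nhds (EReal.tendsto_coe.2 hs))
  constructor
  · intro h
    have := key _ _ (fun k => -(r k)) (-r0) h (hr.neg)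
    have e1 : (fun k => (a k + ((r k : ℝ) : EReal)) + ((-(r k) : ℝ) : EReal)) = a := by
      funext k
      rw [EReal.coe_neg, ← sub_eq_add_neg, EReal.add_sub_cancel_right]
    have e2 : (a0 + (r0 : EReal)) + ((-r0 : ℝ) : EReal) = a0 := by
      rw [EReal.coe_neg, ← sub_eq_add_neg, EReal.add_sub_cancel_right]
    rwa [e1, e2] at this
  · intro h; exact key _ _ _ _ h hr

lemma fsub_add {f : En n → EReal} {g : En n → ℝ} {g' x : En n}
    (hg : HasGradientAt g g' x) {v : En n} (hv : v ∈ FSubdiff f x) :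
    v + g' ∈ FSubdiff (fun y => f y + ((g y : ℝ) : EReal)) x := by
  intro c hc
  obtain ⟨δ₁, hδ₁, H₁⟩ := hv (c/2) (by linarith)
  have h2 : ∀ᶠ y in 𝓝 x, ‖g y - g x - (InnerProductSpace.toDual ℝ (En n) g') (y - x)‖
      ≤ c/2 * ‖y - x‖ := hg.hasFDerivAt.isLittleO.def (by linarith)
  obtain ⟨δ₂, hδ₂, H₂⟩ := Metric.eventually_nhds_iff_ball.1 h2
  refine ⟨min δ₁ δ₂, lt_min hδ₁ hδ₂, fun y hy => ?_⟩
  have hy1 : y ∈ ball x δ₁ := ball_subset_ball (min_le_left _ _) hy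
  have hy2 : y ∈ ball x δ₂ := ball_subset_ball (min_le_right _ _) hy
  have hb := H₂ y hy2
  rw [InnerProductSpace.toDual_apply_apply, Real.norm_eq_abs] at hb
  have hreal : g x + (⟪v + g', y - x⟫ - c * ‖y - x‖)
      ≤ g y + (⟪v, y - x⟫ - c/2 * ‖y - x‖) := by
    rw [inner_add_left]
    have := abs_le.1 hb
    have hnn : (0:ℝ) ≤ ‖y - x‖ := norm_nonneg _
    nlinarith [this.1, this.2]
  calc (f x + ((g x : ℝ) : EReal)) + ((⟪v + g', y - x⟫ - c * ‖y - x‖ : ℝ) : EReal)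
      = f x + (((g x + (⟪v + g', y - x⟫ - c * ‖y - x‖)) : ℝ) : EReal) := by
        rw [EReal.coe_add, add_assoc]
    _ ≤ f x + (((g y + (⟪v, y - x⟫ - c/2 * ‖y - x‖)) : ℝ) : EReal) := by
        exact add_le_add_right (EReal.coe_le_coe_iff.2 hreal) _
    _ = (f x + ((⟪v, y - x⟫ - c/2 * ‖y - x‖ : ℝ) : EReal)) + ((g y : ℝ) : EReal) := by
        rw [EReal.coe_add, add_comm ((g y : ℝ) : EReal), add_assoc]
    _ ≤ f y + ((g y : ℝ) : EReal) := add_le_add_left (H₁ y hy1) _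

lemma fsub_mem_iff {f : En n → EReal} {g : En n → ℝ} (hg : Differentiable ℝ g)
    (x v : En n) :
    v ∈ FSubdiff (fun y => f y + ((g y : ℝ) : EReal)) x ↔ v - gradient g x ∈ FSubdiff f x := by
  constructor
  · intro h
    have h1 : HasFDerivAt g (InnerProductSpace.toDual ℝ (En n) (gradient g x)) x :=
      (hg x).hasGradientAt.hasFDerivAt
    have hneg : HasGradientAt (fun y => -(g y)) (-(gradient g x)) x := by
      have := h1.neg
      rw [← map_neg] at this
      have h' := this.hasGradientAt
      simp [gradient] at h'
      exact h'
    have h2 := fsub_add (f := fun y => f y + ((g y : ℝ) : EReal)) hneg h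
    have e : (fun y => (f y + ((g y : ℝ) : EReal)) + (((-(g y) : ℝ)) : EReal)) = f := by
      funext y
      rw [EReal.coe_neg, ← sub_eq_add_neg, EReal.add_sub_cancel_right]
    rw [e] at h2
    rwa [sub_eq_add_neg]
  · intro h
    have h2 := fsub_add (hg x).hasGradientAt h
    rwa [sub_add_cancel] at h2

lemma lsub_mem_iff {f : En n → EReal} {g : En n → ℝ} (hgd : Differentiable ℝ g)
    (hgc : Continuous (gradient g)) (x v : En n) :
    v ∈ LSubdiff (fun y => f y + ((g y : ℝ) : EReal)) x ↔ v - gradient g x ∈ LSubdiff f x := by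
  have hgcont : Continuous g := hgd.continuous
  constructor
  · rintro ⟨xs, vs, h1, h2, h3, h4⟩
    refine ⟨xs, fun k => vs k - gradient g (xs k), fun k => (fsub_mem_iff hgd _ _).1 (h1 k),
      h2, ?_, h4.sub ((hgc.tendsto _).comp h2)⟩
    exact (ereal_tendsto_add_real ((hgcont.tendsto _).comp h2)).1 h3
  · rintro ⟨xs, vs, h1, h2, h3, h4⟩
    refine ⟨xs, fun k => vs k + gradient g (xs k), fun k => ?_, h2, ?_, ?_⟩
    · refine (fsub_mem_iff hgd _ _).2 ?_
      rw [add_sub_cancel_right]; exact h1 k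
    · exact (ereal_tendsto_add_real ((hgcont.tendsto _).comp h2)).2 h3
    · have := h4.add ((hgc.tendsto _).comp h2)
      rwa [sub_add_cancel] at this

lemma gradient_contDiff {g : En n → ℝ} (hg : ContDiff ℝ 2 g) :
    ContDiff ℝ 1 (gradient g) := by
  have h1 : ContDiff ℝ 1 (fderiv ℝ g) := hg.fderiv_right (by norm_num)
  have e : gradient g = fun x => (InnerProductSpace.toDual ℝ (En n)).symm (fderiv ℝ g x) := rfl
  rw [e]
  exact ((InnerProductSpace.toDual ℝ (En n)).symm.contDiff).comp h1

lemma quot_tendsto {g : En n → ℝ} (hg : ContDiff ℝ 2 g) {t : ℕ → ℝ} {xs : ℕ → En n} {xb : En n}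
    {u1 : En n} (ht : ∀ k, 0 < t k) (hxs : Tendsto xs atTop (𝓝 xb))
    (hq : Tendsto (fun k => (t k)⁻¹ • (xs k - xb)) atTop (𝓝 u1)) :
    Tendsto (fun k => (t k)⁻¹ • (gradient g (xs k) - gradient g xb)) atTop
      (𝓝 (fderiv ℝ (gradient g) xb u1)) := by
  set G := gradient g
  set D := fderiv ℝ G xb with hD
  have hd : HasFDerivAt G D xb :=
    (((gradient_contDiff hg).differentiable one_ne_zero) xb).hasFDerivAt
  have hqn : Tendsto (fun k => (t k)⁻¹ * ‖xs k - xb‖) atTop (𝓝 ‖u1‖) := by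
    have := hq.norm
    convert this using 2 with k
    rw [norm_smul, norm_inv, Real.norm_eq_abs, abs_of_pos (ht k)]
  have hR : Tendsto (fun k => (t k)⁻¹ • (G (xs k) - G xb - D (xs k - xb))) atTop (𝓝 0) := by
    rw [NormedAddCommGroup.tendsto_nhds_zero]
    intro ε hε
    have hc : (0:ℝ) < ε / (2 * (‖u1‖ + 1)) := by positivity
    have h1 : ∀ᶠ k in atTop, ‖G (xs k) - G xb - D (xs k - xb)‖
        ≤ ε / (2 * (‖u1‖ + 1)) * ‖xs k - xb‖ := hxs.eventually (hd.isLittleO.def hc)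
    have h2 : ∀ᶠ k in atTop, (t k)⁻¹ * ‖xs k - xb‖ < ‖u1‖ + 1 :=
      hqn.eventually_lt_const (by linarith [norm_nonneg u1])
    filter_upwards [h1, h2] with k hk1 hk2
    have htk : (0:ℝ) < (t k)⁻¹ := inv_pos.2 (ht k)
    have : ‖(t k)⁻¹ • (G (xs k) - G xb - D (xs k - xb))‖
        = (t k)⁻¹ * ‖G (xs k) - G xb - D (xs k - xb)‖ := by
      rw [norm_smul, norm_inv, Real.norm_eq_abs, abs_of_pos (ht k)]
    rw [this]
    have hle : (t k)⁻¹ * ‖G (xs k) - G xb - D (xs k - xb)‖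
        ≤ ε / (2 * (‖u1‖ + 1)) * ((t k)⁻¹ * ‖xs k - xb‖) := by
      calc (t k)⁻¹ * ‖G (xs k) - G xb - D (xs k - xb)‖
          ≤ (t k)⁻¹ * (ε / (2 * (‖u1‖ + 1)) * ‖xs k - xb‖) :=
            mul_le_mul_of_nonneg_left hk1 htk.le
        _ = ε / (2 * (‖u1‖ + 1)) * ((t k)⁻¹ * ‖xs k - xb‖) := by ring
    have h3 : ε / (2 * (‖u1‖ + 1)) * ((t k)⁻¹ * ‖xs k - xb‖)
        ≤ ε / (2 * (‖u1‖ + 1)) * (‖u1‖ + 1) := mul_le_mul_of_nonneg_left hk2.le hc.le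
    have h4 : ε / (2 * (‖u1‖ + 1)) * (‖u1‖ + 1) = ε / 2 := by
      field_simp
    linarith
  have hDq : Tendsto (fun k => D ((t k)⁻¹ • (xs k - xb))) atTop (𝓝 (D u1)) :=
    (D.continuous.tendsto _).comp hq
  have := hDq.add hR
  rw [add_zero] at this
  convert this using 2 with k
  simp only [smul_sub, map_sub, _root_.map_smul]
  abel

theorem stmt5 (f : En n → EReal) (xb xbs : En n) (hx : xbs ∈ LSubdiff f xb)
    (g : En n → ℝ) (hg : ContDiff ℝ 2 g) :
    AttTangent (fun x => f x + ((g x : ℝ) : EReal)) xb (xbs + gradient g xb)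
      = (fun u : En n × En n => (u.1, fderiv ℝ (gradient g) xb u.1 + u.2)) ''
          AttTangent f xb xbs := by
  have hgd : Differentiable ℝ g := hg.differentiable (by norm_num)
  have hgc : Continuous (gradient g) := (gradient_contDiff hg).continuous
  set D := fderiv ℝ (gradient g) xb with hD
  ext w
  constructor
  · rintro ⟨t, xs, vs, ht, ht0, hmem, hxs, hfv, hvs, hquot⟩
    have hpair : (fun k => (t k)⁻¹ • ((xs k, vs k) - (xb, xbs + gradient g xb)))
        = fun k => (((t k)⁻¹ • (xs k - xb), (t k)⁻¹ • (vs k - (xbs + gradient g xb))) :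
            En n × En n) := rfl
    rw [hpair] at hquot
    have hq1 : Tendsto (fun k => (t k)⁻¹ • (xs k - xb)) atTop (𝓝 w.1) := by
      have := (continuous_fst.tendsto w).comp hquot
      simpa [Function.comp_def] using this
    have hq2 : Tendsto (fun k => (t k)⁻¹ • (vs k - (xbs + gradient g xb))) atTop (𝓝 w.2) := by
      have := (continuous_snd.tendsto w).comp hquot
      simpa [Function.comp_def] using this
    have hf : Tendsto (fun k => f (xs k)) atTop (𝓝 (f xb)) :=
      (ereal_tendsto_add_real ((hgd.continuous.tendsto _).comp hxs)).1 hfv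
    have hws : Tendsto (fun k => vs k - gradient g (xs k)) atTop (𝓝 xbs) := by
      have := hvs.sub ((hgc.tendsto _).comp hxs)
      rwa [add_sub_cancel_right] at this
    have hDq := quot_tendsto hg ht hxs hq1
    have hq2' : Tendsto (fun k => (t k)⁻¹ • ((vs k - gradient g (xs k)) - xbs)) atTop
        (𝓝 (w.2 - D w.1)) := by
      have := hq2.sub hDq
      convert this using 2 with k
      rw [← smul_sub]
      congr 1
      abel
    refine ⟨(w.1, w.2 - D w.1), ⟨t, xs, fun k => vs k - gradient g (xs k), ht, ht0,
      fun k => (lsub_mem_iff hgd hgc _ _).1 (hmem k), hxs, hf, hws, ?_⟩, ?_⟩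
    · exact hq1.prodMk_nhds hq2'
    · simp only
      exact Prod.ext rfl (by module)
  · rintro ⟨u, ⟨t, xs, vs, ht, ht0, hmem, hxs, hf, hvs, hquot⟩, rfl⟩
    have hpair : (fun k => (t k)⁻¹ • ((xs k, vs k) - (xb, xbs)))
        = fun k => (((t k)⁻¹ • (xs k - xb), (t k)⁻¹ • (vs k - xbs)) : En n × En n) := rfl
    rw [hpair] at hquot
    have hq1 : Tendsto (fun k => (t k)⁻¹ • (xs k - xb)) atTop (𝓝 u.1) := by
      have := (continuous_fst.tendsto u).comp hquot
      simpa [Function.comp_def] using this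
    have hq2 : Tendsto (fun k => (t k)⁻¹ • (vs k - xbs)) atTop (𝓝 u.2) := by
      have := (continuous_snd.tendsto u).comp hquot
      simpa [Function.comp_def] using this
    have hDq := quot_tendsto hg ht hxs hq1
    refine ⟨t, xs, fun k => vs k + gradient g (xs k), ht, ht0, fun k => ?_, hxs, ?_, ?_, ?_⟩
    · refine (lsub_mem_iff hgd hgc _ _).2 ?_
      rw [add_sub_cancel_right]; exact hmem k
    · exact (ereal_tendsto_add_real ((hgd.continuous.tendsto _).comp hxs)).2 hf
    · exact hvs.add ((hgc.tendsto _).comp hxs)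
    · have hq2' : Tendsto (fun k => (t k)⁻¹ • ((vs k + gradient g (xs k)) - (xbs + gradient g xb)))
          atTop (𝓝 (D u.1 + u.2)) := by
        have := hq2.add hDq
        rw [add_comm u.2 (D u.1)] at this
        convert this using 2 with k
        rw [← smul_add]
        congr 1
        abel
      exact hq1.prodMk_nhds hq2'
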